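/- arXiv:2309.16596 — 5 statements merged into one kernel-verified Lean document; each statement's English description precedes it below -/
import Mathlib

section
/- Let H and H̃ = H + V be Hermitian matrices of the same size. Let P project onto the eigenstates of H with eigenvalues in an interval [a,b], separated from the other eigenvalues of H by a gap of at least Δ. If ‖V‖ ≤ Δ/4, then there exists a spectral projector P̃ of H̃ onto eigenvalues in [a−Δ/4, b+Δ/4], separated from the remaining eigenvalues of H̃ by a gap at least Δ/2, and ‖P − P̃‖ ≤ 8‖V‖/Δ. -/
open Matrix
open scoped Matrix.Norms.L2Operator Classical

set_option maxHeartbeats 1000000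

variable {n : ℕ}

/-- Operator norm bound for diagonal matrices. -/
lemma diag_norm_le (d : Fin n → ℂ) {c : ℝ} (hc : 0 ≤ c) (h : ∀ i, ‖d i‖ ≤ c) :
    ‖Matrix.diagonal d‖ ≤ c := by
  rw [Matrix.l2_opNorm_def]
  refine ContinuousLinearMap.opNorm_le_bound _ hc fun x => ?_
  show ‖Matrix.toEuclideanLin (Matrix.diagonal d) x‖ ≤ _
  rw [Matrix.toEuclideanLin_apply]
  rw [EuclideanSpace.norm_eq, EuclideanSpace.norm_eq]
  rw [show c * Real.sqrt (∑ i, ‖x i‖ ^ 2) = Real.sqrt (c^2 * ∑ i, ‖x i‖^2) by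
    rw [Real.sqrt_mul (by positivity), Real.sqrt_sq hc]]
  apply Real.sqrt_le_sqrt
  rw [Finset.mul_sum]
  apply Finset.sum_le_sum
  intro i _
  have : (WithLp.toLp 2 (Matrix.diagonal d *ᵥ WithLp.ofLp x)) i
      = d i * x i := by
    simp [Matrix.mulVec_diagonal]
  rw [this, norm_mul, mul_pow]
  exact mul_le_mul_of_nonneg_right (pow_le_pow_left₀ (norm_nonneg _) (h i) 2) (sq_nonneg _)

/-- The ℓ² norm of a column is at most the operator norm. -/
lemma col_sq_le (R : Matrix (Fin n) (Fin n) ℂ) (j : Fin n) :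
    ∑ i, ‖R i j‖ ^ 2 ≤ ‖R‖ ^ 2 := by
  have h := Matrix.l2_opNorm_mulVec R (EuclideanSpace.single j (1 : ℂ))
  rw [EuclideanSpace.norm_single, norm_one, mul_one] at h
  have hnorm : ‖(EuclideanSpace.equiv (Fin n) ℂ).symm <|
      R *ᵥ (EuclideanSpace.single j (1 : ℂ))‖ = Real.sqrt (∑ i, ‖R i j‖ ^ 2) := by
    rw [EuclideanSpace.norm_eq]
    congr 1
    apply Finset.sum_congr rfl
    intro i _
    congr 1
    show ‖(R *ᵥ (EuclideanSpace.single j (1 : ℂ) : Fin n → ℂ)) i‖ = _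
    congr 1
    simp [Matrix.mulVec, dotProduct, EuclideanSpace.single_apply]
  rw [hnorm] at h
  nlinarith [Real.sq_sqrt (show (0:ℝ) ≤ ∑ i, ‖R i j‖ ^ 2 by positivity),
    Real.sqrt_nonneg (∑ i, ‖R i j‖ ^ 2), norm_nonneg R]

/-- Weyl-type estimate: every eigenvalue of the perturbed matrix is close to some eigenvalue. -/
lemma weyl_aux (lam mu : Fin n → ℝ) (M R : Matrix (Fin n) (Fin n) ℂ)
    (hR : ∀ i j, R i j = M i j * ((mu j - lam i : ℝ) : ℂ))
    (hcol : ∀ j, ∑ i, ‖M i j‖ ^ 2 = 1) (j : Fin n) :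
    ∃ i, |mu j - lam i| ≤ ‖R‖ := by
  by_contra hcon
  push_neg at hcon
  have h1 : ∑ i, ‖R i j‖ ^ 2 ≤ ‖R‖ ^ 2 := col_sq_le R j
  have h2 : ‖R‖ ^ 2 < ∑ i, ‖R i j‖ ^ 2 := by
    have hterm : ∀ i, ‖R i j‖ ^ 2 = ‖M i j‖ ^ 2 * |mu j - lam i| ^ 2 := by
      intro i
      rw [hR i j, norm_mul, Complex.norm_real, Real.norm_eq_abs, mul_pow]
    obtain ⟨i₀, hi₀⟩ : ∃ i, ‖M i j‖ ^ 2 ≠ 0 := by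
      by_contra hz
      push_neg at hz
      have := hcol j
      rw [Finset.sum_eq_zero (fun i _ => hz i)] at this
      norm_num at this
    have hlt : ∑ i, ‖M i j‖ ^ 2 * ‖R‖ ^ 2 < ∑ i, ‖M i j‖ ^ 2 * |mu j - lam i| ^ 2 := by
      apply Finset.sum_lt_sum
      · intro i _
        apply mul_le_mul_of_nonneg_left _ (by positivity)
        exact pow_le_pow_left₀ (norm_nonneg R) (le_of_lt (hcon i)) 2
      · refine ⟨i₀, Finset.mem_univ _, ?_⟩
        apply mul_lt_mul_of_pos_left _ (lt_of_le_of_ne (by positivity) (Ne.symm hi₀))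
        have h0 : (0:ℝ) ≤ ‖R‖ := norm_nonneg R
        have := hcon i₀
        nlinarith [abs_nonneg (mu j - lam i₀)]
    calc ‖R‖ ^ 2 = (∑ i, ‖M i j‖ ^ 2) * ‖R‖ ^ 2 := by rw [hcol j, one_mul]
      _ = ∑ i, ‖M i j‖ ^ 2 * ‖R‖ ^ 2 := by rw [Finset.sum_mul]
      _ < ∑ i, ‖M i j‖ ^ 2 * |mu j - lam i| ^ 2 := hlt
      _ = ∑ i, ‖R i j‖ ^ 2 := by
          apply Finset.sum_congr rfl
          intro i _
          rw [hterm i]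
  linarith

/-- Core Davis–Kahan / Sylvester estimate for diagonal matrices. -/
lemma dk_core (lam mu : Fin n → ℝ) (M R : Matrix (Fin n) (Fin n) ℂ)
    (hR : ∀ i j, R i j = M i j * ((mu j - lam i : ℝ) : ℂ))
    (d e : Fin n → ℂ) (hd : ∀ i, d i = 0 ∨ d i = 1) (he : ∀ j, e j = 0 ∨ e j = 1)
    (c L m : ℝ) (hL : 0 ≤ L) (hm : L < m)
    (hlam : ∀ i, d i = 1 → |lam i - c| ≤ L)
    (hmu : ∀ j, e j = 1 → m ≤ |mu j - c|) :
    ‖Matrix.diagonal d * M * Matrix.diagonal e‖ ≤ ‖R‖ / (m - L) := by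
  have hm0 : 0 < m := lt_of_le_of_lt hL hm
  set D := Matrix.diagonal d with hD
  set E := Matrix.diagonal e with hE
  set X := D * M * E with hX
  set Λc : Matrix (Fin n) (Fin n) ℂ := Matrix.diagonal (fun i => ((lam i - c : ℝ) : ℂ)) with hΛ
  set G : Matrix (Fin n) (Fin n) ℂ :=
    Matrix.diagonal (fun j => if e j = 1 then (((mu j - c : ℝ) : ℂ))⁻¹ else 0) with hG
  have hXentry : ∀ i j, X i j = d i * M i j * e j := by
    intro i j
    rw [hX, hD, hE, Matrix.mul_diagonal, Matrix.diagonal_mul]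
  have hXD : X = D * X := by
    ext i j
    rw [hD, Matrix.diagonal_mul, hXentry i j]
    rcases hd i with h | h <;> simp [h]
  have hkey : X = (Λc * X + D * R * E) * G := by
    ext i j
    rw [Matrix.mul_diagonal, Matrix.add_apply, Matrix.diagonal_mul, hXentry i j,
      Matrix.mul_diagonal, Matrix.diagonal_mul]
    rcases he j with h | h
    · simp [h]
    · rw [h]
      have hne0 : (mu j - c : ℝ) ≠ 0 := by
        have := hmu j h
        intro h0
        rw [h0, abs_zero] at this
        linarith
      have hne : ((mu j : ℂ) - (c : ℂ)) ≠ 0 := by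
        rw [← Complex.ofReal_sub, Complex.ofReal_ne_zero]
        exact hne0
      rw [if_pos rfl, hR i j]
      push_cast
      field_simp
      ring
  have hΛD : ‖Λc * D‖ ≤ L := by
    rw [hΛ, hD, Matrix.diagonal_mul_diagonal]
    apply diag_norm_le _ hL
    intro i
    rcases hd i with h | h
    · simp [h, hL]
    · rw [h, mul_one, Complex.norm_real, Real.norm_eq_abs]
      exact hlam i h
  have hDn : ‖D‖ ≤ 1 := by
    rw [hD]; apply diag_norm_le _ zero_le_one
    intro i; rcases hd i with h | h <;> simp [h]
  have hEn : ‖E‖ ≤ 1 := by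
    rw [hE]; apply diag_norm_le _ zero_le_one
    intro j; rcases he j with h | h <;> simp [h]
  have hGn : ‖G‖ ≤ 1 / m := by
    rw [hG]; apply diag_norm_le _ (by positivity)
    intro j
    rcases he j with h | h
    · rw [h, if_neg (by norm_num : ¬(0:ℂ) = 1), norm_zero]
      positivity
    · rw [if_pos h, norm_inv, Complex.norm_real, Real.norm_eq_abs]
      rw [one_div]
      exact inv_anti₀ hm0 (hmu j h)
  have hDRE : ‖D * R * E‖ ≤ ‖R‖ := by
    calc ‖D * R * E‖ ≤ ‖D * R‖ * ‖E‖ := Matrix.l2_opNorm_mul _ _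
      _ ≤ ‖D‖ * ‖R‖ * ‖E‖ :=
          mul_le_mul_of_nonneg_right (Matrix.l2_opNorm_mul _ _) (norm_nonneg _)
      _ ≤ 1 * ‖R‖ * 1 := by
          apply mul_le_mul (mul_le_mul_of_nonneg_right hDn (norm_nonneg _)) hEn
            (norm_nonneg _) (by positivity)
      _ = ‖R‖ := by ring
  have hΛX : ‖Λc * X‖ ≤ L * ‖X‖ := by
    calc ‖Λc * X‖ = ‖(Λc * D) * X‖ := by
          conv_lhs => rw [hXD]
          rw [mul_assoc]
      _ ≤ ‖Λc * D‖ * ‖X‖ := Matrix.l2_opNorm_mul _ _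
      _ ≤ L * ‖X‖ := mul_le_mul_of_nonneg_right hΛD (norm_nonneg _)
  have hbound : ‖X‖ ≤ (L * ‖X‖ + ‖R‖) * (1 / m) := by
    calc ‖X‖ = ‖(Λc * X + D * R * E) * G‖ := by rw [← hkey]
      _ ≤ ‖Λc * X + D * R * E‖ * ‖G‖ := Matrix.l2_opNorm_mul _ _
      _ ≤ (‖Λc * X‖ + ‖D * R * E‖) * ‖G‖ :=
          mul_le_mul_of_nonneg_right (norm_add_le _ _) (norm_nonneg _)
      _ ≤ (L * ‖X‖ + ‖R‖) * (1 / m) := by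
          apply mul_le_mul (add_le_add hΛX hDRE) hGn (norm_nonneg _)
          positivity
  rw [le_div_iff₀ (by linarith : (0:ℝ) < m - L)]
  have hXn : (0:ℝ) ≤ ‖X‖ := norm_nonneg _
  have h1 : ‖X‖ * m ≤ L * ‖X‖ + ‖R‖ := by
    have := mul_le_mul_of_nonneg_right hbound (le_of_lt hm0)
    calc ‖X‖ * m ≤ (L * ‖X‖ + ‖R‖) * (1 / m) * m := this
      _ = L * ‖X‖ + ‖R‖ := by field_simp
  linarith

/-- Mirrored core estimate (interval on the `e`/`mu` side). -/
lemma dk_core_right (lam mu : Fin n → ℝ) (M R : Matrix (Fin n) (Fin n) ℂ)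
    (hR : ∀ i j, R i j = M i j * ((mu j - lam i : ℝ) : ℂ))
    (d e : Fin n → ℂ) (hd : ∀ i, d i = 0 ∨ d i = 1) (he : ∀ j, e j = 0 ∨ e j = 1)
    (c L m : ℝ) (hL : 0 ≤ L) (hm : L < m)
    (hmu : ∀ j, e j = 1 → |mu j - c| ≤ L)
    (hlam : ∀ i, d i = 1 → m ≤ |lam i - c|) :
    ‖Matrix.diagonal d * M * Matrix.diagonal e‖ ≤ ‖R‖ / (m - L) := by
  have hR' : ∀ i j, (-Rᴴ) i j = Mᴴ i j * ((lam j - mu i : ℝ) : ℂ) := by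
    intro i j
    rw [Matrix.neg_apply, Matrix.conjTranspose_apply, Matrix.conjTranspose_apply, hR j i]
    rw [star_mul']
    push_cast
    rw [star_sub]
    simp [Complex.star_def, Complex.conj_ofReal]
    ring
  have h := dk_core mu lam Mᴴ (-Rᴴ) hR' e d he hd c L m hL hm hmu hlam
  have hds : ∀ i, star (d i) = d i := by
    intro i; rcases hd i with h' | h' <;> simp [h']
  have hes : ∀ j, star (e j) = e j := by
    intro j; rcases he j with h' | h' <;> simp [h']
  have hct : (Matrix.diagonal d * M * Matrix.diagonal e)ᴴ
      = Matrix.diagonal e * Mᴴ * Matrix.diagonal d := by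
    rw [Matrix.conjTranspose_mul, Matrix.conjTranspose_mul, Matrix.diagonal_conjTranspose,
      Matrix.diagonal_conjTranspose]
    have h1 : star d = d := funext hds
    have h2 : star e = e := funext hes
    rw [h1, h2, mul_assoc]
  calc ‖Matrix.diagonal d * M * Matrix.diagonal e‖
      = ‖(Matrix.diagonal d * M * Matrix.diagonal e)ᴴ‖ :=
        (Matrix.l2_opNorm_conjTranspose _).symm
    _ = ‖Matrix.diagonal e * Mᴴ * Matrix.diagonal d‖ := by rw [hct]
    _ ≤ ‖-Rᴴ‖ / (m - L) := h
    _ = ‖R‖ / (m - L) := by rw [norm_neg, Matrix.l2_opNorm_conjTranspose]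


/-- The spectral projector of a Hermitian matrix onto the eigenvalues lying in the set `s`. -/
noncomputable def specProj {n : ℕ} {H : Matrix (Fin n) (Fin n) ℂ}
    (hH : H.IsHermitian) (s : Set ℝ) : Matrix (Fin n) (Fin n) ℂ :=
  (hH.eigenvectorUnitary : Matrix (Fin n) (Fin n) ℂ) *
    Matrix.diagonal (fun i => if hH.eigenvalues i ∈ s then (1 : ℂ) else 0) *
    star (hH.eigenvectorUnitary : Matrix (Fin n) (Fin n) ℂ)

/-- Davis–Kahan / Weyl subspace perturbation. If `P` projects onto the eigenvalues
of `H` in `[a,b]`, separated from the rest of the spectrum by a gap `Δ`, and `‖V‖ ≤ Δ/4`, then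
the spectral projector `Ptil` of `H̃ = H + V` onto `[a - Δ/4, b + Δ/4]` exists, its eigenvalues are
separated from the remaining spectrum of `H̃` by at least `Δ/2`, and `‖P - Ptil‖ ≤ 8‖V‖/Δ`. -/
theorem spectral_projector_perturbation {n : ℕ} (H V : Matrix (Fin n) (Fin n) ℂ)
    (hH : H.IsHermitian) (hHV : (H + V).IsHermitian)
    (a b Δ : ℝ) (hΔ : 0 < Δ)
    (hgap : ∀ i, hH.eigenvalues i ∈ Set.Icc a b ∨
      hH.eigenvalues i ≤ a - Δ ∨ b + Δ ≤ hH.eigenvalues i)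
    (hV : ‖V‖ ≤ Δ / 4) :
    ∃ Ptil : Matrix (Fin n) (Fin n) ℂ,
      Ptil = specProj hHV (Set.Icc (a - Δ / 4) (b + Δ / 4)) ∧
      (∀ i, hHV.eigenvalues i ∈ Set.Icc (a - Δ / 4) (b + Δ / 4) ∨
        hHV.eigenvalues i ≤ a - Δ / 4 - Δ / 2 ∨ b + Δ / 4 + Δ / 2 ≤ hHV.eigenvalues i) ∧
      ‖specProj hH (Set.Icc a b) - Ptil‖ ≤ 8 * ‖V‖ / Δ := by
  set U : Matrix (Fin n) (Fin n) ℂ := (hH.eigenvectorUnitary : Matrix (Fin n) (Fin n) ℂ) with hU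
  set W : Matrix (Fin n) (Fin n) ℂ := (hHV.eigenvectorUnitary : Matrix (Fin n) (Fin n) ℂ) with hW
  have hUU : U * star U = 1 := mem_unitaryGroup_iff.mp hH.eigenvectorUnitary.2
  have hWW : W * star W = 1 := mem_unitaryGroup_iff.mp hHV.eigenvectorUnitary.2
  set M : Matrix (Fin n) (Fin n) ℂ := star U * W with hM
  set R : Matrix (Fin n) (Fin n) ℂ := star U * V * W with hR
  set lam := hH.eigenvalues with hlamdef
  set mu := hHV.eigenvalues with hmudef
  have hDiag1 := hH.conjStarAlgAut_star_eigenvectorUnitary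
  rw [Unitary.conjStarAlgAut_star_apply] at hDiag1
  have hDiag2 := hHV.conjStarAlgAut_star_eigenvectorUnitary
  rw [Unitary.conjStarAlgAut_star_apply] at hDiag2
  have hRid : R = M * Matrix.diagonal (RCLike.ofReal ∘ mu)
      - Matrix.diagonal (RCLike.ofReal ∘ lam) * M := by
    rw [← hDiag1, ← hDiag2, hR, hM]
    have e1 : star U * W * (star W * (H + V) * W) = star U * ((H + V) * W) := by
      calc star U * W * (star W * (H + V) * W)
          = star U * (W * star W) * ((H + V) * W) := by simp only [mul_assoc]
        _ = star U * ((H + V) * W) := by rw [hWW, mul_one]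
    have e2 : star U * H * U * (star U * W) = star U * (H * W) := by
      calc star U * H * U * (star U * W)
          = star U * (H * ((U * star U) * W)) := by simp only [mul_assoc]
        _ = star U * (H * W) := by rw [hUU, one_mul]
    rw [e1, e2]
    noncomm_ring
  have hRentry : ∀ i j, R i j = M i j * ((mu j - lam i : ℝ) : ℂ) := by
    intro i j
    rw [hRid, Matrix.sub_apply, Matrix.mul_diagonal, Matrix.diagonal_mul]
    simp only [Function.comp_apply]
    have hco : (RCLike.ofReal : ℝ → ℂ) = Complex.ofReal := rfl
    rw [hco]
    push_cast
    ring
  have hnormR : ‖R‖ = ‖V‖ := by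
    rw [hR, mul_assoc, ← Unitary.coe_star]
    rw [CStarRing.norm_coe_unitary_mul]
    exact CStarRing.norm_mul_mem_unitary V hHV.eigenvectorUnitary.2
  have hMu : M ∈ unitary (Matrix (Fin n) (Fin n) ℂ) :=
    mul_mem (Unitary.star_mem hH.eigenvectorUnitary.2) hHV.eigenvectorUnitary.2
  have hstarM : star M * M = 1 := (Unitary.mem_iff.mp hMu).1
  have hMcol : ∀ j, ∑ i, ‖M i j‖ ^ 2 = 1 := by
    intro j
    have h0 := congrArg (fun A => A j j) hstarM
    change (star M * M) j j = (1 : Matrix (Fin n) (Fin n) ℂ) j j at h0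
    rw [Matrix.mul_apply, Matrix.one_apply_eq] at h0
    have h1 : ∀ i, (star M) j i * M i j = ((‖M i j‖ ^ 2 : ℝ) : ℂ) := by
      intro i
      rw [Matrix.star_apply, Complex.star_def]
      rw [← Complex.normSq_eq_conj_mul_self]
      rw [← Complex.sq_norm]
    rw [Finset.sum_congr rfl (fun i _ => h1 i), ← Complex.ofReal_sum] at h0
    exact_mod_cast h0
  have hweyl : ∀ j, ∃ i, |mu j - lam i| ≤ ‖V‖ := by
    intro j
    obtain ⟨i, hi⟩ := weyl_aux lam mu M R hRentry hMcol j
    exact ⟨i, by rwa [hnormR] at hi⟩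
  -- the gap statement for the perturbed matrix
  have htri : ∀ j, mu j ∈ Set.Icc (a - Δ / 4) (b + Δ / 4) ∨
      mu j ≤ a - Δ / 4 - Δ / 2 ∨ b + Δ / 4 + Δ / 2 ≤ mu j := by
    intro j
    obtain ⟨i, hi⟩ := hweyl j
    have hV4 : |mu j - lam i| ≤ Δ / 4 := le_trans hi hV
    rw [abs_le] at hV4
    rcases hgap i with h | h | h
    · rw [Set.mem_Icc] at h
      left; rw [Set.mem_Icc]
      constructor <;> linarith [h.1, h.2, hV4.1, hV4.2]
    · right; left; linarith [hV4.1, hV4.2]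
    · right; right; linarith [hV4.1, hV4.2]
  -- indicator functions
  set dInd : Fin n → ℂ := fun i => if lam i ∈ Set.Icc a b then (1 : ℂ) else 0 with hdInd
  set eInd : Fin n → ℂ :=
    fun j => if mu j ∈ Set.Icc (a - Δ / 4) (b + Δ / 4) then (1 : ℂ) else 0 with heInd
  have hPdef : specProj hH (Set.Icc a b) = U * Matrix.diagonal dInd * star U := by
    unfold specProj
    congr 2
    ext i j
    by_cases hij : i = j
    · subst hij
      rw [Matrix.diagonal_apply_eq, Matrix.diagonal_apply_eq]
      simp only [hdInd]
      by_cases hc : hH.eigenvalues i ∈ Set.Icc a b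
      · rw [if_pos hc, if_pos hc]
      · rw [if_neg hc, if_neg hc]
    · rw [Matrix.diagonal_apply_ne _ hij, Matrix.diagonal_apply_ne _ hij]
  have hPtdef : specProj hHV (Set.Icc (a - Δ / 4) (b + Δ / 4))
      = W * Matrix.diagonal eInd * star W := by
    unfold specProj
    congr 2
    ext i j
    by_cases hij : i = j
    · subst hij
      rw [Matrix.diagonal_apply_eq, Matrix.diagonal_apply_eq]
      simp only [heInd]
      by_cases hc : hHV.eigenvalues i ∈ Set.Icc (a - Δ / 4) (b + Δ / 4)
      · rw [if_pos hc, if_pos hc]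
      · rw [if_neg hc, if_neg hc]
    · rw [Matrix.diagonal_apply_ne _ hij, Matrix.diagonal_apply_ne _ hij]
  have hVnn : (0:ℝ) ≤ ‖V‖ := norm_nonneg V
  refine ⟨specProj hHV (Set.Icc (a - Δ / 4) (b + Δ / 4)), rfl, htri, ?_⟩
  -- main norm bound
  rcases le_or_gt a b with hab | hab
  · -- main case a ≤ b
    set X : Matrix (Fin n) (Fin n) ℂ :=
      Matrix.diagonal dInd * M - M * Matrix.diagonal eInd with hX
    have hPdiff : specProj hH (Set.Icc a b)
        - specProj hHV (Set.Icc (a - Δ / 4) (b + Δ / 4)) = U * X * star W := by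
      rw [hPdef, hPtdef, hX, mul_sub, sub_mul]
      have q1 : U * (Matrix.diagonal dInd * M) * star W = U * Matrix.diagonal dInd * star U := by
        rw [hM]
        calc U * (Matrix.diagonal dInd * (star U * W)) * star W
            = U * Matrix.diagonal dInd * star U * (W * star W) := by simp only [mul_assoc]
          _ = U * Matrix.diagonal dInd * star U := by rw [hWW, mul_one]
      have q2 : U * (M * Matrix.diagonal eInd) * star W
          = W * Matrix.diagonal eInd * star W := by
        rw [hM]
        calc U * (star U * W * Matrix.diagonal eInd) * star W
            = (U * star U) * (W * (Matrix.diagonal eInd * star W)) := by simp only [mul_assoc]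
          _ = W * Matrix.diagonal eInd * star W := by rw [hUU, one_mul, ← mul_assoc]
      rw [q1, q2]
    have hnormX : ‖specProj hH (Set.Icc a b)
        - specProj hHV (Set.Icc (a - Δ / 4) (b + Δ / 4))‖ = ‖X‖ := by
      rw [hPdiff]
      rw [CStarRing.norm_mul_mem_unitary (U * X) (Unitary.star_mem hHV.eigenvectorUnitary.2)]
      exact CStarRing.norm_mem_unitary_mul X hH.eigenvectorUnitary.2
    -- split indicators
    set ep : Fin n → ℂ := fun j => if b + Δ / 4 < mu j then (1 : ℂ) else 0 with hep
    set em : Fin n → ℂ := fun j => if mu j < a - Δ / 4 then (1 : ℂ) else 0 with hem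
    set dp : Fin n → ℂ := fun i => if b < lam i then (1 : ℂ) else 0 with hdp
    set dm : Fin n → ℂ := fun i => if lam i < a then (1 : ℂ) else 0 with hdm
    have h01 : ∀ (f : Fin n → ℂ), (∀ x, f x = 0 ∨ f x = 1) ∨ True := fun _ => Or.inr trivial
    have hd01 : ∀ i, dInd i = 0 ∨ dInd i = 1 := by
      intro i; rw [hdInd]; by_cases h : lam i ∈ Set.Icc a b <;> simp [h]
    have he01 : ∀ j, eInd j = 0 ∨ eInd j = 1 := by
      intro j; simp only [heInd]
      by_cases h : mu j ∈ Set.Icc (a - Δ / 4) (b + Δ / 4) <;> simp [h]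
    have hep01 : ∀ j, ep j = 0 ∨ ep j = 1 := by
      intro j; rw [hep]; by_cases h : b + Δ / 4 < mu j <;> simp [h]
    have hem01 : ∀ j, em j = 0 ∨ em j = 1 := by
      intro j; rw [hem]; by_cases h : mu j < a - Δ / 4 <;> simp [h]
    have hdp01 : ∀ i, dp i = 0 ∨ dp i = 1 := by
      intro i; rw [hdp]; by_cases h : b < lam i <;> simp [h]
    have hdm01 : ∀ i, dm i = 0 ∨ dm i = 1 := by
      intro i; rw [hdm]; by_cases h : lam i < a <;> simp [h]
    have hescalar : ∀ j, ep j + em j = 1 - eInd j := by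
      intro j
      simp only [hep, hem, heInd, Set.mem_Icc]
      by_cases h1 : mu j < a - Δ / 4
      · rw [if_neg (show ¬ b + Δ / 4 < mu j by intro h'; linarith), if_pos h1,
          if_neg (show ¬ (a - Δ / 4 ≤ mu j ∧ mu j ≤ b + Δ / 4) by intro h'; linarith [h'.1])]
        norm_num
      · by_cases h2 : b + Δ / 4 < mu j
        · rw [if_pos h2, if_neg h1,
            if_neg (show ¬ (a - Δ / 4 ≤ mu j ∧ mu j ≤ b + Δ / 4) by intro h'; linarith [h'.2])]
          norm_num
        · rw [if_neg h2, if_neg h1, if_pos ⟨not_lt.mp h1, not_lt.mp h2⟩]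
          norm_num
    have hesplit : Matrix.diagonal ep + Matrix.diagonal em = 1 - Matrix.diagonal eInd := by
      ext i j
      by_cases hij : i = j
      · subst hij
        simp only [Matrix.add_apply, Matrix.sub_apply, Matrix.diagonal_apply_eq,
          Matrix.one_apply_eq]
        exact hescalar i
      · simp [Matrix.diagonal_apply_ne _ hij, Matrix.one_apply_ne hij]
    have hdscalar : ∀ i, dp i + dm i = 1 - dInd i := by
      intro i
      simp only [hdp, hdm, hdInd, Set.mem_Icc]
      by_cases h1 : lam i < a
      · rw [if_neg (show ¬ b < lam i by intro h'; linarith), if_pos h1,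
          if_neg (show ¬ (a ≤ lam i ∧ lam i ≤ b) by intro h'; linarith [h'.1])]
        norm_num
      · by_cases h2 : b < lam i
        · rw [if_pos h2, if_neg h1,
            if_neg (show ¬ (a ≤ lam i ∧ lam i ≤ b) by intro h'; linarith [h'.2])]
          norm_num
        · rw [if_neg h2, if_neg h1, if_pos ⟨not_lt.mp h1, not_lt.mp h2⟩]
          norm_num
    have hdsplit : Matrix.diagonal dp + Matrix.diagonal dm = 1 - Matrix.diagonal dInd := by
      ext i j
      by_cases hij : i = j
      · subst hij
        simp only [Matrix.add_apply, Matrix.sub_apply, Matrix.diagonal_apply_eq,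
          Matrix.one_apply_eq]
        exact hdscalar i
      · simp [Matrix.diagonal_apply_ne _ hij, Matrix.one_apply_ne hij]
    set T1 := Matrix.diagonal dInd * M * Matrix.diagonal ep with hT1
    set T2 := Matrix.diagonal dInd * M * Matrix.diagonal em with hT2
    set T3 := Matrix.diagonal dp * M * Matrix.diagonal eInd with hT3
    set T4 := Matrix.diagonal dm * M * Matrix.diagonal eInd with hT4
    have hXsplit : X = T1 + T2 - (T3 + T4) := by
      rw [hT1, hT2, hT3, hT4, hX]
      have step : Matrix.diagonal dInd * M * Matrix.diagonal ep
          + Matrix.diagonal dInd * M * Matrix.diagonal em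
          - (Matrix.diagonal dp * M * Matrix.diagonal eInd
            + Matrix.diagonal dm * M * Matrix.diagonal eInd)
          = Matrix.diagonal dInd * M * (Matrix.diagonal ep + Matrix.diagonal em)
          - (Matrix.diagonal dp + Matrix.diagonal dm) * M * Matrix.diagonal eInd := by
        noncomm_ring
      rw [step, hesplit, hdsplit]
      noncomm_ring
    -- bounds on the four pieces
    have hlam_int : ∀ i, dInd i = 1 → |lam i - a| ≤ b - a := by
      intro i h
      simp only [hdInd] at h
      by_cases hc : lam i ∈ Set.Icc a b
      · rw [Set.mem_Icc] at hc
        rw [abs_le]; constructor <;> linarith [hc.1, hc.2]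
      · rw [if_neg hc] at h; norm_num at h
    have hlam_int' : ∀ i, dInd i = 1 → |lam i - b| ≤ b - a := by
      intro i h
      simp only [hdInd] at h
      by_cases hc : lam i ∈ Set.Icc a b
      · rw [Set.mem_Icc] at hc
        rw [abs_le]; constructor <;> linarith [hc.1, hc.2]
      · rw [if_neg hc] at h; norm_num at h
    have hmu_hi : ∀ j, ep j = 1 → b - a + 3 * Δ / 4 ≤ |mu j - a| := by
      intro j h
      simp only [hep] at h
      by_cases hc : b + Δ / 4 < mu j
      · have h3 : b + Δ / 4 + Δ / 2 ≤ mu j := by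
          rcases htri j with ht | ht | ht
          · rw [Set.mem_Icc] at ht; linarith [ht.2]
          · linarith
          · linarith
        rw [abs_of_nonneg (by linarith)]
        linarith
      · rw [if_neg hc] at h; norm_num at h
    have hmu_lo : ∀ j, em j = 1 → b - a + 3 * Δ / 4 ≤ |mu j - b| := by
      intro j h
      simp only [hem] at h
      by_cases hc : mu j < a - Δ / 4
      · have h3 : mu j ≤ a - Δ / 4 - Δ / 2 := by
          rcases htri j with ht | ht | ht
          · rw [Set.mem_Icc] at ht; linarith [ht.1]
          · linarith
          · linarith
        rw [abs_of_nonpos (by linarith)]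
        linarith
      · rw [if_neg hc] at h; norm_num at h
    have hmu_int : ∀ j, eInd j = 1 → |mu j - (a - Δ / 4)| ≤ b - a + Δ / 2 := by
      intro j h
      simp only [heInd] at h
      by_cases hc : mu j ∈ Set.Icc (a - Δ / 4) (b + Δ / 4)
      · rw [Set.mem_Icc] at hc
        rw [abs_le]; constructor <;> linarith [hc.1, hc.2]
      · rw [if_neg hc] at h; norm_num at h
    have hmu_int' : ∀ j, eInd j = 1 → |mu j - (b + Δ / 4)| ≤ b - a + Δ / 2 := by
      intro j h
      simp only [heInd] at h
      by_cases hc : mu j ∈ Set.Icc (a - Δ / 4) (b + Δ / 4)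
      · rw [Set.mem_Icc] at hc
        rw [abs_le]; constructor <;> linarith [hc.1, hc.2]
      · rw [if_neg hc] at h; norm_num at h
    have hlam_hi : ∀ i, dp i = 1 → b - a + Δ / 2 + 3 * Δ / 4 ≤ |lam i - (a - Δ / 4)| := by
      intro i h
      simp only [hdp] at h
      by_cases hc : b < lam i
      · have h3 : b + Δ ≤ lam i := by
          rcases hgap i with hg | hg | hg
          · rw [Set.mem_Icc] at hg; linarith [hg.2]
          · linarith
          · linarith
        rw [abs_of_nonneg (by linarith)]
        linarith
      · rw [if_neg hc] at h; norm_num at h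
    have hlam_lo : ∀ i, dm i = 1 → b - a + Δ / 2 + 3 * Δ / 4 ≤ |lam i - (b + Δ / 4)| := by
      intro i h
      simp only [hdm] at h
      by_cases hc : lam i < a
      · have h3 : lam i ≤ a - Δ := by
          rcases hgap i with hg | hg | hg
          · rw [Set.mem_Icc] at hg; linarith [hg.1]
          · linarith
          · linarith
        rw [abs_of_nonpos (by linarith)]
        linarith
      · rw [if_neg hc] at h; norm_num at h
    have hb1 : ‖T1‖ ≤ ‖R‖ / (3 * Δ / 4) := by
      have := dk_core lam mu M R hRentry dInd ep hd01 hep01 a (b - a) (b - a + 3 * Δ / 4)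
        (by linarith) (by linarith) hlam_int hmu_hi
      rwa [show b - a + 3 * Δ / 4 - (b - a) = 3 * Δ / 4 by ring] at this
    have hb2 : ‖T2‖ ≤ ‖R‖ / (3 * Δ / 4) := by
      have := dk_core lam mu M R hRentry dInd em hd01 hem01 b (b - a) (b - a + 3 * Δ / 4)
        (by linarith) (by linarith) hlam_int' hmu_lo
      rwa [show b - a + 3 * Δ / 4 - (b - a) = 3 * Δ / 4 by ring] at this
    have hb3 : ‖T3‖ ≤ ‖R‖ / (3 * Δ / 4) := by
      have := dk_core_right lam mu M R hRentry dp eInd hdp01 he01 (a - Δ / 4)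
        (b - a + Δ / 2) (b - a + Δ / 2 + 3 * Δ / 4)
        (by linarith) (by linarith) hmu_int hlam_hi
      rwa [show b - a + Δ / 2 + 3 * Δ / 4 - (b - a + Δ / 2) = 3 * Δ / 4 by ring] at this
    have hb4 : ‖T4‖ ≤ ‖R‖ / (3 * Δ / 4) := by
      have := dk_core_right lam mu M R hRentry dm eInd hdm01 he01 (b + Δ / 4)
        (b - a + Δ / 2) (b - a + Δ / 2 + 3 * Δ / 4)
        (by linarith) (by linarith) hmu_int' hlam_lo
      rwa [show b - a + Δ / 2 + 3 * Δ / 4 - (b - a + Δ / 2) = 3 * Δ / 4 by ring] at this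
    have hXbound : ‖X‖ ≤ 4 * (‖R‖ / (3 * Δ / 4)) := by
      rw [hXsplit]
      calc ‖T1 + T2 - (T3 + T4)‖ ≤ ‖T1 + T2‖ + ‖T3 + T4‖ := norm_sub_le _ _
        _ ≤ (‖T1‖ + ‖T2‖) + (‖T3‖ + ‖T4‖) := add_le_add (norm_add_le _ _) (norm_add_le _ _)
        _ ≤ 4 * (‖R‖ / (3 * Δ / 4)) := by linarith [hb1, hb2, hb3, hb4]
    rw [hnormR] at hXbound
    have hfinal : 4 * (‖V‖ / (3 * Δ / 4)) ≤ 8 * ‖V‖ / Δ := by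
      calc 4 * (‖V‖ / (3 * Δ / 4)) = 16 * ‖V‖ / (3 * Δ) := by
            rw [eq_div_iff (by linarith : (3:ℝ) * Δ ≠ 0)]
            field_simp
            ring
        _ ≤ 8 * ‖V‖ / Δ := by
            rw [div_le_div_iff₀ (by linarith) hΔ]
            nlinarith [hVnn]
    rw [hnormX]
    linarith [hXbound, hfinal]
  · -- degenerate case b < a : both projectors vanish
    have hD0 : dInd = fun _ => 0 := by
      funext i
      simp only [hdInd]
      rw [if_neg]
      intro hc
      rw [Set.mem_Icc] at hc
      linarith [hc.1, hc.2]
    have hE0 : eInd = fun _ => 0 := by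
      funext j
      simp only [heInd]
      rw [if_neg]
      intro hc
      rw [Set.mem_Icc] at hc
      obtain ⟨i, hi⟩ := hweyl j
      have hV4 : |mu j - lam i| ≤ Δ / 4 := le_trans hi hV
      rw [abs_le] at hV4
      rcases hgap i with h | h | h
      · rw [Set.mem_Icc] at h; linarith [h.1, h.2]
      · linarith [hc.1, hV4.2]
      · linarith [hc.2, hV4.1]
    have hP0 : specProj hH (Set.Icc a b) = 0 := by
      rw [hPdef, hD0, Matrix.diagonal_zero, mul_zero, zero_mul]
    have hPt0 : specProj hHV (Set.Icc (a - Δ / 4) (b + Δ / 4)) = 0 := by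
      rw [hPtdef, hE0, Matrix.diagonal_zero, mul_zero, zero_mul]
    rw [hP0, hPt0, sub_zero, norm_zero]
    positivity
end

section
/- (Integration by parts for the windowed operator Fourier transform.) Let H be Hermitian, A an operator, A(t) = e^{iHt} A e^{−iHt}, and Â(ω) = (2πτ)^{−1/2} ∫_{−τ/2}^{τ/2} A(t) e^{−iωt} dt. Then [H, Â(ω)] = ω Â(ω) + (i√(2πτ))^{−1} (A(τ/2) e^{−iωτ/2} − A(−τ/2) e^{iωτ/2}). -/
open Matrix MeasureTheory Complex
open scoped Matrix.Norms.L2Operator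

/-- Heisenberg evolution `A(t) = e^{iHt} A e^{-iHt}`. -/
noncomputable def heisEvol {n : ℕ} (H A : Matrix (Fin n) (Fin n) ℂ) (t : ℝ) :
    Matrix (Fin n) (Fin n) ℂ :=
  NormedSpace.exp ((Complex.I * t) • H) * A * NormedSpace.exp ((-(Complex.I * t)) • H)

/-- The operator Fourier transform with the uniform window of width `τ`:
`Â(ω) = (2πτ)^{-1/2} ∫_{-τ/2}^{τ/2} A(t) e^{-iωt} dt`. -/
noncomputable def oftWin {n : ℕ} (H A : Matrix (Fin n) (Fin n) ℂ) (τ ω : ℝ) :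
    Matrix (Fin n) (Fin n) ℂ :=
  ((Real.sqrt (2 * Real.pi * τ) : ℂ))⁻¹ •
    ∫ t in (-(τ / 2))..(τ / 2), Complex.exp (-(Complex.I * ω * t)) • heisEvol H A t

section Aux

variable {n : ℕ} (H A : Matrix (Fin n) (Fin n) ℂ)

lemma real_smul_I_smul (s : ℝ) : s • (Complex.I • H) = (Complex.I * s) • H := by
  rw [← algebraMap_smul ℂ s (Complex.I • H), smul_smul]
  norm_num [Algebra.algebraMap_eq_smul_one, mul_comm]

lemma heisEvol_eq (t : ℝ) :
    heisEvol H A t = NormedSpace.exp (t • (Complex.I • H)) * A *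
      NormedSpace.exp ((-t) • (Complex.I • H)) := by
  rw [heisEvol, real_smul_I_smul, real_smul_I_smul]
  push_cast
  ring_nf

lemma hasDerivAt_heisEvol (t : ℝ) :
    HasDerivAt (heisEvol H A)
      (Complex.I • (H * heisEvol H A t - heisEvol H A t * H)) t := by
  set M : Matrix (Fin n) (Fin n) ℂ := Complex.I • H with hM
  set E : ℝ → Matrix (Fin n) (Fin n) ℂ := fun s => NormedSpace.exp (s • M) with hE
  have hexp1 : ∀ s : ℝ, HasDerivAt E (M * E s) s := by
    intro s
    simp only [hE]
    exact hasDerivAt_exp_smul_const' (𝕂 := ℝ) M s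
  have hexp2 : ∀ s : ℝ, HasDerivAt E (E s * M) s := by
    intro s
    simp only [hE]
    exact hasDerivAt_exp_smul_const (𝕂 := ℝ) M s
  have hneg : HasDerivAt (fun s : ℝ => E (-s)) ((-1 : ℝ) • (E (-t) * M)) t :=
    (hexp2 (-t)).scomp t (hasDerivAt_neg t)
  have h1 : HasDerivAt (fun s : ℝ => E s * A) (M * E t * A) t := (hexp1 t).mul_const A
  have h := h1.mul hneg
  have hfun : heisEvol H A = fun s => E s * A * E (-s) := funext (heisEvol_eq H A)
  rw [hfun]
  refine HasDerivAt.congr_deriv h ?_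
  simp only [hM, neg_one_smul, mul_neg, smul_sub, smul_mul_assoc, mul_smul_comm, mul_assoc]
  abel

lemma continuous_heisEvol : Continuous (heisEvol H A) := by
  exact continuous_iff_continuousAt.2 fun t => (hasDerivAt_heisEvol H A t).continuousAt

end Aux

/-- Integration by parts for the windowed operator Fourier transform:
`[H, Â(ω)] = ω Â(ω) + (i√(2πτ))⁻¹ (A(τ/2) e^{-iωτ/2} - A(-τ/2) e^{iωτ/2})`. -/
theorem oft_integration_by_parts {n : ℕ} (H A : Matrix (Fin n) (Fin n) ℂ)
    (hH : H.IsHermitian) (τ : ℝ) (hτ : 0 < τ) (ω : ℝ) :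
    H * oftWin H A τ ω - oftWin H A τ ω * H
      = (ω : ℂ) • oftWin H A τ ω +
        (Complex.I * (Real.sqrt (2 * Real.pi * τ) : ℂ))⁻¹ •
          (Complex.exp (-(Complex.I * ω * (τ / 2))) • heisEvol H A (τ / 2)
            - Complex.exp (Complex.I * ω * (τ / 2)) • heisEvol H A (-(τ / 2))) := by
  set a : ℝ := -(τ / 2)
  set b : ℝ := τ / 2
  set c : ℂ := (Real.sqrt (2 * Real.pi * τ) : ℂ) with hc
  set f : ℝ → Matrix (Fin n) (Fin n) ℂ :=
    fun t => Complex.exp (-(Complex.I * ω * t)) • heisEvol H A t with hf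
  set f' : ℝ → Matrix (Fin n) (Fin n) ℂ :=
    fun t => Complex.I • (H * f t - f t * H) - (Complex.I * ω) • f t with hf'
  -- continuity
  have hce : Continuous fun t : ℝ => Complex.exp (-(Complex.I * ω * t)) := by fun_prop
  have hcf : Continuous f := hce.smul (continuous_heisEvol H A)
  have hcf' : Continuous f' := by
    apply Continuous.sub
    · exact (continuous_const (y := Complex.I)).smul ((continuous_const.mul hcf).sub (hcf.mul continuous_const))
    · exact (continuous_const (y := Complex.I * ω)).smul hcf
  -- derivative of f
  have hderiv : ∀ t : ℝ, HasDerivAt f (f' t) t := by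
    intro t
    have hlin : HasDerivAt (fun z : ℂ => -(Complex.I * ω) * z) (-(Complex.I * ω)) (t : ℂ) := by
      simpa using (hasDerivAt_id (t : ℂ)).const_mul (-(Complex.I * ω))
    have h0 : HasDerivAt (fun z : ℂ => Complex.exp (-(Complex.I * ω) * z))
        (Complex.exp (-(Complex.I * ω) * t) * -(Complex.I * ω)) (t : ℂ) :=
      (Complex.hasDerivAt_exp _).comp _ hlin
    have hc1 : HasDerivAt (fun s : ℝ => Complex.exp (-(Complex.I * ω * s)))
        (-(Complex.exp (-(Complex.I * ω * t)) * (Complex.I * ω))) t := by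
      have h1 := h0.comp_ofReal
      simpa only [neg_mul, mul_neg] using h1
    have := hc1.smul (hasDerivAt_heisEvol H A t)
    refine HasDerivAt.congr_deriv this ?_
    simp only [hf', hf, smul_smul, smul_sub, mul_smul_comm, smul_mul_assoc]
    module
  -- FTC
  have hFTC : (∫ t in a..b, f' t) = f b - f a :=
    intervalIntegral.integral_eq_sub_of_hasDerivAt (fun t _ => hderiv t)
      (hcf'.intervalIntegrable a b)
  set S : Matrix (Fin n) (Fin n) ℂ := ∫ t in a..b, f t with hS
  have hint : IntervalIntegrable f volume a b := hcf.intervalIntegrable a b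
  -- pull things out of the integral
  have hmulL : (∫ t in a..b, H * f t) = H * S := by
    have := (ContinuousLinearMap.mul ℂ (Matrix (Fin n) (Fin n) ℂ) H).intervalIntegral_comp_comm hint
    simpa using this
  have hmulR : (∫ t in a..b, f t * H) = S * H := by
    have := ((ContinuousLinearMap.mul ℂ (Matrix (Fin n) (Fin n) ℂ)).flip H).intervalIntegral_comp_comm hint
    simpa using this
  have hsplit : (∫ t in a..b, f' t) = Complex.I • (H * S - S * H) - (Complex.I * ω) • S := by
    rw [hf']
    rw [intervalIntegral.integral_sub, intervalIntegral.integral_smul, intervalIntegral.integral_smul,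
      intervalIntegral.integral_sub, hmulL, hmulR]
    · exact (continuous_const.mul hcf).intervalIntegrable a b
    · exact (hcf.mul continuous_const).intervalIntegrable a b
    · exact ((continuous_const (y := Complex.I)).smul ((continuous_const.mul hcf).sub (hcf.mul continuous_const))).intervalIntegrable a b
    · exact ((continuous_const (y := Complex.I * ω)).smul hcf).intervalIntegrable a b
  have key : Complex.I • (H * S - S * H) - (Complex.I * ω) • S = f b - f a := by
    rw [← hsplit, hFTC]
  -- solve for the commutator
  have hIne : Complex.I ≠ 0 := Complex.I_ne_zero
  have hcomm : H * S - S * H = (ω : ℂ) • S + Complex.I⁻¹ • (f b - f a) := by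
    have h2 : Complex.I • (H * S - S * H) = (f b - f a) + (Complex.I * ω) • S := by
      rw [← key]; abel
    calc H * S - S * H = Complex.I⁻¹ • (Complex.I • (H * S - S * H)) := by
          rw [smul_smul, inv_mul_cancel₀ hIne, one_smul]
      _ = Complex.I⁻¹ • ((f b - f a) + (Complex.I * ω) • S) := by rw [h2]
      _ = (ω : ℂ) • S + Complex.I⁻¹ • (f b - f a) := by
          rw [smul_add, smul_smul, ← mul_assoc, inv_mul_cancel₀ hIne, one_mul, add_comm]
  -- assemble
  have hoft : oftWin H A τ ω = c⁻¹ • S := rfl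
  rw [hoft]
  rw [mul_smul_comm, smul_mul_assoc, ← smul_sub, hcomm]
  have hfb : f b = Complex.exp (-(Complex.I * ω * (τ / 2))) • heisEvol H A (τ / 2) := by
    simp [hf, b]
  have hfa : f a = Complex.exp (Complex.I * ω * (τ / 2)) • heisEvol H A (-(τ / 2)) := by
    simp only [hf, a]
    push_cast
    ring_nf
  rw [hfb, hfa, mul_inv]
  simp only [smul_add, smul_smul]
  simp only [a, b]
  ring_nf
end

section
/- (Norm inequality from operator purification.) For any operator O, any finite families of operators {A_i}, {A'_j} on the same Hilbert space, and any scalar matrix G = (G_{ij}), one has ‖Σ_{i,j} A_i† O A'_j G_{ij}‖ ≤ ‖G‖ · ‖O‖ · sqrt(‖Σ_i A_i† A_i‖ · ‖Σ_j A'_j† A'_j‖). -/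
open Matrix
open scoped Matrix.Norms.L2Operator

private lemma eucl_norm_sq {ι : Type*} [Fintype ι] (y : EuclideanSpace ℂ ι) :
    ‖y‖ ^ 2 = ∑ i, ‖y i‖ ^ 2 := by
  rw [EuclideanSpace.norm_eq, Real.sq_sqrt (by positivity)]

private lemma l2_opNorm_le_bound' {m p : Type*} [Fintype m] [Fintype p] [DecidableEq p]
    (M : Matrix m p ℂ) (c : ℝ) (hc : 0 ≤ c)
    (h : ∀ x : EuclideanSpace ℂ p, ‖(EuclideanSpace.equiv m ℂ).symm (M *ᵥ x)‖ ≤ c * ‖x‖) :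
    ‖M‖ ≤ c := by
  rw [Matrix.l2_opNorm_def]
  exact ContinuousLinearMap.opNorm_le_bound _ hc h

/-- block index first: `M (k,c) (j,b) = δ_{kj} B c b` -/
private lemma blockfst_norm_le {r p q : Type*} [Fintype r] [Fintype p] [Fintype q]
    [DecidableEq r] [DecidableEq p] [DecidableEq q] (B : Matrix p q ℂ) :
    ‖(Matrix.of fun (x : r × p) (y : r × q) =>
        if x.1 = y.1 then B x.2 y.2 else 0 : Matrix (r × p) (r × q) ℂ)‖ ≤ ‖B‖ := by
  apply l2_opNorm_le_bound' _ _ (norm_nonneg B)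
  intro x
  set xk : r → EuclideanSpace ℂ q := fun k => (EuclideanSpace.equiv q ℂ).symm (fun b => x (k, b))
    with hxk
  have hmv : ∀ k c, ((Matrix.of fun (x : r × p) (y : r × q) =>
      if x.1 = y.1 then B x.2 y.2 else 0 : Matrix (r × p) (r × q) ℂ) *ᵥ x) (k, c)
      = (B *ᵥ (xk k)) c := by
    intro k c
    simp [Matrix.mulVec, dotProduct, Fintype.sum_prod_type, hxk, ite_mul, zero_mul]
  have key : ∀ k, ∑ c, ‖(B *ᵥ (xk k)) c‖ ^ 2 ≤ (‖B‖ * ‖xk k‖) ^ 2 := by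
    intro k
    have h1 := Matrix.l2_opNorm_mulVec B (xk k)
    have h2 : ‖(EuclideanSpace.equiv p ℂ).symm (B *ᵥ (xk k))‖ ^ 2
        = ∑ c, ‖(B *ᵥ (xk k)) c‖ ^ 2 := by
      rw [eucl_norm_sq]; rfl
    calc ∑ c, ‖(B *ᵥ (xk k)) c‖ ^ 2 = _ := h2.symm
      _ ≤ (‖B‖ * ‖xk k‖) ^ 2 := by
          apply pow_le_pow_left₀ (norm_nonneg _) h1
  have hfin : ‖(EuclideanSpace.equiv (r × p) ℂ).symm
      ((Matrix.of fun (x : r × p) (y : r × q) =>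
        if x.1 = y.1 then B x.2 y.2 else 0 : Matrix (r × p) (r × q) ℂ) *ᵥ x)‖ ^ 2
      ≤ (‖B‖ * ‖x‖) ^ 2 := by
    rw [eucl_norm_sq]
    calc ∑ z : r × p, ‖((EuclideanSpace.equiv (r × p) ℂ).symm
          ((Matrix.of fun (x : r × p) (y : r × q) =>
            if x.1 = y.1 then B x.2 y.2 else 0 : Matrix (r × p) (r × q) ℂ) *ᵥ x)) z‖ ^ 2
        = ∑ k, ∑ c, ‖(B *ᵥ (xk k)) c‖ ^ 2 := by
          rw [Fintype.sum_prod_type]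
          refine Finset.sum_congr rfl fun k _ => Finset.sum_congr rfl fun c _ => ?_
          exact congrArg (fun t => ‖t‖ ^ 2) (hmv k c)
      _ ≤ ∑ k, (‖B‖ * ‖xk k‖) ^ 2 := Finset.sum_le_sum fun k _ => key k
      _ = (‖B‖ * ‖x‖) ^ 2 := by
          simp only [mul_pow]
          rw [← Finset.mul_sum]
          congr 1
          rw [eucl_norm_sq x, Fintype.sum_prod_type]
          refine Finset.sum_congr rfl fun k _ => ?_
          rw [eucl_norm_sq (xk k)]
          rfl
  calc ‖_‖ = Real.sqrt (_ ^ 2) := (Real.sqrt_sq (norm_nonneg _)).symm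
    _ ≤ Real.sqrt ((‖B‖ * ‖x‖) ^ 2) := Real.sqrt_le_sqrt hfin
    _ = ‖B‖ * ‖x‖ := Real.sqrt_sq (by positivity)

/-- block index second: `M (c,k) (b,j) = δ_{kj} B c b` -/
private lemma blocksnd_norm_le {r p q : Type*} [Fintype r] [Fintype p] [Fintype q]
    [DecidableEq r] [DecidableEq p] [DecidableEq q] (B : Matrix p q ℂ) :
    ‖(Matrix.of fun (x : p × r) (y : q × r) =>
        if x.2 = y.2 then B x.1 y.1 else 0 : Matrix (p × r) (q × r) ℂ)‖ ≤ ‖B‖ := by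
  apply l2_opNorm_le_bound' _ _ (norm_nonneg B)
  intro x
  set xk : r → EuclideanSpace ℂ q := fun k => (EuclideanSpace.equiv q ℂ).symm (fun b => x (b, k))
    with hxk
  have hmv : ∀ k c, ((Matrix.of fun (x : p × r) (y : q × r) =>
      if x.2 = y.2 then B x.1 y.1 else 0 : Matrix (p × r) (q × r) ℂ) *ᵥ x) (c, k)
      = (B *ᵥ (xk k)) c := by
    intro k c
    simp [Matrix.mulVec, dotProduct, Fintype.sum_prod_type, hxk, ite_mul, zero_mul]
  have key : ∑ z : p × r, ‖((Matrix.of fun (x : p × r) (y : q × r) =>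
      if x.2 = y.2 then B x.1 y.1 else 0 : Matrix (p × r) (q × r) ℂ) *ᵥ x) z‖ ^ 2
      ≤ (‖B‖ * ‖x‖) ^ 2 := by
    calc ∑ z : p × r, ‖((Matrix.of fun (x : p × r) (y : q × r) =>
          if x.2 = y.2 then B x.1 y.1 else 0 : Matrix (p × r) (q × r) ℂ) *ᵥ x) z‖ ^ 2
        = ∑ k, ∑ c, ‖(B *ᵥ (xk k)) c‖ ^ 2 := by
          rw [Fintype.sum_prod_type, Finset.sum_comm]
          exact Finset.sum_congr rfl fun k _ => Finset.sum_congr rfl fun c _ =>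
            congrArg (fun t => ‖t‖ ^ 2) (hmv k c)
      _ ≤ ∑ k, (‖B‖ * ‖xk k‖) ^ 2 := by
          refine Finset.sum_le_sum fun k _ => ?_
          have h1 := Matrix.l2_opNorm_mulVec B (xk k)
          have h2 : ‖(EuclideanSpace.equiv p ℂ).symm (B *ᵥ (xk k))‖ ^ 2
              = ∑ c, ‖(B *ᵥ (xk k)) c‖ ^ 2 := by rw [eucl_norm_sq]; rfl
          rw [← h2]
          exact pow_le_pow_left₀ (norm_nonneg _) h1 2
      _ = (‖B‖ * ‖x‖) ^ 2 := by
          simp only [mul_pow]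
          rw [← Finset.mul_sum]
          congr 1
          rw [eucl_norm_sq x, Fintype.sum_prod_type, Finset.sum_comm]
          refine Finset.sum_congr rfl fun k _ => ?_
          rw [eucl_norm_sq (xk k)]
          rfl
  have hfin : ‖(EuclideanSpace.equiv (p × r) ℂ).symm
      ((Matrix.of fun (x : p × r) (y : q × r) =>
        if x.2 = y.2 then B x.1 y.1 else 0 : Matrix (p × r) (q × r) ℂ) *ᵥ x)‖ ^ 2
      ≤ (‖B‖ * ‖x‖) ^ 2 := by
    rw [eucl_norm_sq]; exact key
  calc ‖_‖ = Real.sqrt (_ ^ 2) := (Real.sqrt_sq (norm_nonneg _)).symm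
    _ ≤ Real.sqrt ((‖B‖ * ‖x‖) ^ 2) := Real.sqrt_le_sqrt hfin
    _ = ‖B‖ * ‖x‖ := Real.sqrt_sq (by positivity)

/-- Norm inequality from operator purification:
`‖Σ_{i,j} A_i† O A'_j G_{ij}‖ ≤ ‖G‖ ‖O‖ √(‖Σ_i A_i† A_i‖ ‖Σ_j A'_j† A'_j‖)`. -/
theorem purification_norm_bound {n : ℕ} {ι κ : Type*} [Fintype ι] [Fintype κ]
    [DecidableEq ι] [DecidableEq κ]
    (O : Matrix (Fin n) (Fin n) ℂ) (A : ι → Matrix (Fin n) (Fin n) ℂ)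
    (A' : κ → Matrix (Fin n) (Fin n) ℂ) (G : Matrix ι κ ℂ) :
    ‖∑ i, ∑ j, G i j • ((A i)ᴴ * O * A' j)‖ ≤
      ‖G‖ * ‖O‖ * Real.sqrt (‖∑ i, (A i)ᴴ * A i‖ * ‖∑ j, (A' j)ᴴ * A' j‖) := by
  classical
  set V : Matrix (Fin n × ι) (Fin n) ℂ :=
    Matrix.of fun (x : Fin n × ι) (b : Fin n) => A x.2 x.1 b with hVdef
  set V' : Matrix (Fin n × κ) (Fin n) ℂ :=
    Matrix.of fun (x : Fin n × κ) (b : Fin n) => A' x.2 x.1 b with hV'def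
  set M1 : Matrix (Fin n × ι) (Fin n × κ) ℂ :=
    Matrix.of fun x y => if x.1 = y.1 then G x.2 y.2 else 0 with hM1def
  set M2 : Matrix (Fin n × κ) (Fin n × κ) ℂ :=
    Matrix.of fun x y => if x.2 = y.2 then O x.1 y.1 else 0 with hM2def
  -- the purification identity
  have hT : ∑ i, ∑ j, G i j • ((A i)ᴴ * O * A' j) = Vᴴ * M1 * M2 * V' := by
    rw [hVdef, hV'def, hM1def, hM2def]
    ext a b
    simp only [Matrix.mul_apply, Matrix.sum_apply, Fintype.sum_prod_type, conjTranspose_apply,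
      Matrix.of_apply, Matrix.smul_apply, smul_eq_mul, Finset.sum_mul, Finset.mul_sum, ite_mul,
      mul_ite, zero_mul, mul_zero, Finset.sum_ite_irrel, Finset.sum_ite_eq, Finset.sum_ite_eq',
      Finset.sum_const_zero, Finset.mem_univ, if_true]
    rw [show ∀ (f : ι → κ → Fin n → Fin n → ℂ), ∑ i, ∑ j, ∑ c, ∑ d, f i j c d
        = ∑ z : ι × κ × Fin n × Fin n, f z.1 z.2.1 z.2.2.1 z.2.2.2 from
      fun f => by simp [Fintype.sum_prod_type]]
    rw [show ∀ (g : Fin n → κ → Fin n → ι → ℂ), ∑ x, ∑ x1, ∑ x2, ∑ x4, g x x1 x2 x4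
        = ∑ w : Fin n × κ × Fin n × ι, g w.1 w.2.1 w.2.2.1 w.2.2.2 from
      fun g => by simp [Fintype.sum_prod_type]]
    exact Fintype.sum_equiv
      ⟨fun z : ι × κ × Fin n × Fin n => (z.2.2.1, z.2.1, z.2.2.2, z.1),
       fun w : Fin n × κ × Fin n × ι => (w.2.2.2, w.2.1, w.1, w.2.2.1),
       fun _ => rfl, fun _ => rfl⟩ _ _ (fun z => by simp only [Equiv.coe_fn_mk]; ring)
  have hV : Vᴴ * V = ∑ i, (A i)ᴴ * A i := by
    rw [hVdef]
    ext a b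
    simp only [Matrix.mul_apply, Matrix.sum_apply, Fintype.sum_prod_type, conjTranspose_apply,
      Matrix.of_apply]
    exact Finset.sum_comm
  have hV' : V'ᴴ * V' = ∑ j, (A' j)ᴴ * A' j := by
    rw [hV'def]
    ext a b
    simp only [Matrix.mul_apply, Matrix.sum_apply, Fintype.sum_prod_type, conjTranspose_apply,
      Matrix.of_apply]
    exact Finset.sum_comm
  have hnV : ‖V‖ = Real.sqrt ‖∑ i, (A i)ᴴ * A i‖ := by
    rw [← hV, Matrix.l2_opNorm_conjTranspose_mul_self]
    exact (Real.sqrt_mul_self (norm_nonneg V)).symm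
  have hnV' : ‖V'‖ = Real.sqrt ‖∑ j, (A' j)ᴴ * A' j‖ := by
    rw [← hV', Matrix.l2_opNorm_conjTranspose_mul_self]
    exact (Real.sqrt_mul_self (norm_nonneg V')).symm
  have hM1 : ‖M1‖ ≤ ‖G‖ := blockfst_norm_le (r := Fin n) G
  have hM2 : ‖M2‖ ≤ ‖O‖ := blocksnd_norm_le (r := κ) O
  calc ‖∑ i, ∑ j, G i j • ((A i)ᴴ * O * A' j)‖ = ‖Vᴴ * M1 * M2 * V'‖ := by rw [hT]
    _ ≤ ‖Vᴴ * M1 * M2‖ * ‖V'‖ := Matrix.l2_opNorm_mul _ _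
    _ ≤ (‖Vᴴ * M1‖ * ‖M2‖) * ‖V'‖ := by
        gcongr; exact Matrix.l2_opNorm_mul _ _
    _ ≤ ((‖Vᴴ‖ * ‖M1‖) * ‖M2‖) * ‖V'‖ := by
        gcongr; exact Matrix.l2_opNorm_mul _ _
    _ ≤ ((‖Vᴴ‖ * ‖G‖) * ‖O‖) * ‖V'‖ := by gcongr
    _ = ‖G‖ * ‖O‖ * (‖V‖ * ‖V'‖) := by rw [Matrix.l2_opNorm_conjTranspose]; ring
    _ = ‖G‖ * ‖O‖ * Real.sqrt (‖∑ i, (A i)ᴴ * A i‖ * ‖∑ j, (A' j)ᴴ * A' j‖) := by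
        rw [hnV, hnV', Real.sqrt_mul (norm_nonneg _)]
end

section
/- (Negative gradient condition implies all local minima are global.) Let H be Hermitian with ground space projector P_G, and L_a (a = 1,...,m) superoperators. Suppose there exists α ∈ ℝ^m_{≥0} with ‖α‖₁ = 1 such that −Σ_a α_a L_a†[H] ⪰ (2ε/δ)(I − P_G) − εI. Then any state ρ satisfying −Tr(L_a†[H] ρ) ≤ ε for all a obeys Tr(P_G ρ) ≥ 1 − δ. -/
open Matrix
open scoped ComplexOrder

lemma trace_mul_psd_nonneg {n : ℕ} {A B : Matrix (Fin n) (Fin n) ℂ}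
    (hA : A.PosSemidef) (hB : B.PosSemidef) : 0 ≤ (A * B).trace := by
  obtain ⟨C, rfl⟩ : ∃ C : Matrix (Fin n) (Fin n) ℂ, A = Cᴴ * C := by
    open scoped MatrixOrder in
    obtain ⟨C, hC⟩ := CStarAlgebra.nonneg_iff_eq_star_mul_self.mp hA.nonneg
    exact ⟨C, hC⟩
  rw [Matrix.mul_assoc, Matrix.trace_mul_comm]
  have h := hB.mul_mul_conjTranspose_same C
  rw [Matrix.trace]
  apply Finset.sum_nonneg
  intro i _
  have := h.dotProduct_mulVec_nonneg (Pi.single i 1)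
  simpa [dotProduct, Matrix.mulVec, Matrix.diag, Pi.single_apply, Finset.sum_ite_eq, Finset.sum_ite_eq'] using this

/-- negative gradient condition implies all local minima are global. If
`-Σ_a α_a L_a†[H] ⪰ (2ε/δ)(I - P_G) - ε I` for some probability vector `α`, then any state `ρ`
with `-Tr(L_a†[H] ρ) ≤ ε` for all `a` satisfies `Tr(P_G ρ) ≥ 1 - δ`. -/
theorem negative_gradient_implies_global {n m : ℕ}
    (H PG ρ : Matrix (Fin n) (Fin n) ℂ) (hH : H.IsHermitian)
    (hPG : PG.IsHermitian) (hPG2 : PG * PG = PG)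
    (Ld : Fin m → (Matrix (Fin n) (Fin n) ℂ →ₗ[ℂ] Matrix (Fin n) (Fin n) ℂ))
    (ε δ : ℝ) (hε : 0 < ε) (hδ : 0 < δ)
    (α : Fin m → ℝ) (hα : ∀ a, 0 ≤ α a) (hα1 : (∑ a, α a) = 1)
    (hNGC : ((-(∑ a, α a • (Ld a H))) -
      ((2 * ε / δ) • ((1 : Matrix (Fin n) (Fin n) ℂ) - PG)
        - ε • (1 : Matrix (Fin n) (Fin n) ℂ))).PosSemidef)
    (hρ : ρ.PosSemidef) (hρ1 : ρ.trace = 1)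
    (hLM : ∀ a, -(((Ld a H) * ρ).trace.re) ≤ ε) :
    1 - δ ≤ (PG * ρ).trace.re := by
  have key := trace_mul_psd_nonneg hNGC hρ
  set p : ℝ := (PG * ρ).trace.re with hp
  have hexp : (((-(∑ a, α a • (Ld a H))) -
      ((2 * ε / δ) • ((1 : Matrix (Fin n) (Fin n) ℂ) - PG)
        - ε • (1 : Matrix (Fin n) (Fin n) ℂ))) * ρ).trace
      = -(∑ a, (α a : ℝ) • ((Ld a H) * ρ).trace)
        - ((2 * ε / δ) • ((1:ℂ) - (PG * ρ).trace) - (ε : ℝ) • (1:ℂ)) := by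
    simp only [Matrix.sub_mul, Matrix.neg_mul, Matrix.sum_mul, smul_mul_assoc,
      Matrix.one_mul, Matrix.trace_sub, Matrix.trace_neg, Matrix.trace_sum,
      Matrix.trace_smul, hρ1, smul_sub]
  rw [hexp] at key
  have hre : (0:ℝ) ≤ (-(∑ a, (α a : ℝ) • ((Ld a H) * ρ).trace)
        - ((2 * ε / δ) • ((1:ℂ) - (PG * ρ).trace) - (ε : ℝ) • (1:ℂ))).re := by
    exact (Complex.le_def.mp key).1
  simp only [Complex.sub_re, Complex.neg_re, Complex.re_sum, Complex.real_smul,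
    Complex.mul_re, Complex.ofReal_re, Complex.ofReal_im, Complex.one_re, Complex.one_im,
    Complex.sub_im, Complex.one_im] at hre
  -- bound the sum
  have hsum : -ε ≤ ∑ a, α a * ((Ld a H) * ρ).trace.re := by
    have : ∀ a ∈ Finset.univ, α a * (-ε) ≤ α a * ((Ld a H) * ρ).trace.re := by
      intro a _
      exact mul_le_mul_of_nonneg_left (by linarith [hLM a]) (hα a)
    calc -ε = ∑ a, α a * (-ε) := by rw [← Finset.sum_mul, hα1]; ring
      _ ≤ _ := Finset.sum_le_sum this
  have hkey : 2 * ε / δ * (1 - p) ≤ 2 * ε := by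
    simp only [zero_mul, sub_zero, mul_one] at hre
    nlinarith [hre, hsum]
  rw [div_mul_eq_mul_div, div_le_iff₀ hδ] at hkey
  nlinarith [hkey, hε]
end

section
/- (Cooling by gradient descent decreases energy.) Let H be Hermitian with ‖H‖_∞ ≤ B, B ≥ 1, and let {L_a} be superoperators such that ‖L_a†‖_{∞→∞} ≤ 3B' and ‖L_a†(H)‖_∞ ≤ 3B for all a (so the second derivative of energy along any single direction is bounded by 9B² in magnitude, assuming B' ≤ B). Suppose g is a real number with |g − Tr(H L_{a*}[ρ])| < 0.01·ε̃ and g < −0.99·ε̃ for some index a* and some 0 < ε̃ < 1/2. Then for the step size s = |g|/(9B²), the state ρ_next = exp(s L_{a*})(ρ) satisfies Tr(H ρ_next) < Tr(Hρ) − ε̃²/(20B²). -/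
open Matrix
open scoped ComplexOrder

set_option synthInstance.maxHeartbeats 1000000
set_option maxHeartbeats 3000000
attribute [local instance] Matrix.normedAddCommGroup Matrix.normedSpace

/-- The operator (spectral) norm `‖A‖_∞` of a complex matrix. -/
noncomputable def opNorm {n : ℕ} (A : Matrix (Fin n) (Fin n) ℂ) : ℝ :=
  ‖Matrix.toEuclideanCLM (𝕜 := ℂ) A‖

instance cooling_isTopologicalRing (n : ℕ) :
    IsTopologicalRing (Matrix (Fin n) (Fin n) ℂ →L[ℂ] Matrix (Fin n) (Fin n) ℂ) :=
  letI : NormedRing (Matrix (Fin n) (Fin n) ℂ →L[ℂ] Matrix (Fin n) (Fin n) ℂ) :=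
    ContinuousLinearMap.toNormedRing
  NonUnitalSeminormedRing.toIsTopologicalRing

lemma abs_trace_mul_le {n : ℕ} (A ρ : Matrix (Fin n) (Fin n) ℂ)
    (hρ : ρ.PosSemidef) (h1 : ρ.trace = 1) :
    ‖(A * ρ).trace‖ ≤ opNorm A := by
  classical
  have hherm := hρ.1
  set U : Matrix (Fin n) (Fin n) ℂ := (hherm.eigenvectorUnitary : Matrix (Fin n) (Fin n) ℂ) with hU
  set μ : Fin n → ℝ := hherm.eigenvalues with hμ
  have hspec := hherm.spectral_theorem
  rw [Unitary.conjStarAlgAut_apply] at hspec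
  rw [← hU, ← hμ] at hspec
  have key : (A * ρ).trace = ∑ i, (μ i : ℂ) * ((star U * (A * U)) i i) := by
    calc (A * ρ).trace
        = ((star U * (A * U)) * Matrix.diagonal (RCLike.ofReal ∘ μ)).trace := by
          conv_lhs => rw [hspec]
          rw [show A * (U * Matrix.diagonal (RCLike.ofReal ∘ μ) * star U)
              = (A * U) * Matrix.diagonal (RCLike.ofReal ∘ μ) * star U by
            simp only [Matrix.mul_assoc]]
          rw [Matrix.trace_mul_cycle, Matrix.mul_assoc]
      _ = ∑ i, (μ i : ℂ) * ((star U * (A * U)) i i) := by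
          rw [Matrix.trace]
          simp [Matrix.diag, Matrix.mul_diagonal, mul_comm]
  have hdiag : ∀ i, ‖(star U * (A * U)) i i‖ ≤ opNorm A := by
    intro i
    set v : EuclideanSpace ℂ (Fin n) := hherm.eigenvectorBasis i with hv'
    have hv : ‖v‖ = 1 := hherm.eigenvectorBasis.orthonormal.1 i
    have hentry : (star U * (A * U)) i i
        = inner ℂ v (Matrix.toEuclideanCLM (𝕜 := ℂ) A v) := by
      rw [EuclideanSpace.inner_eq_star_dotProduct]
      simp only [ofLp_toEuclideanCLM]
      rw [Matrix.mul_apply]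
      simp only [dotProduct, Pi.star_apply]
      apply Finset.sum_congr rfl
      intro j _
      rw [Matrix.mul_apply, mul_comm]
      rfl
    rw [hentry]
    calc ‖inner ℂ v (Matrix.toEuclideanCLM (𝕜 := ℂ) A v)‖
        = ‖(inner ℂ v (Matrix.toEuclideanCLM (𝕜 := ℂ) A v) : ℂ)‖ := rfl
      _ ≤ ‖v‖ * ‖Matrix.toEuclideanCLM (𝕜 := ℂ) A v‖ := norm_inner_le_norm _ _
      _ ≤ ‖v‖ * (‖Matrix.toEuclideanCLM (𝕜 := ℂ) A‖ * ‖v‖) :=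
          mul_le_mul_of_nonneg_left (ContinuousLinearMap.le_opNorm _ _) (norm_nonneg _)
      _ = opNorm A := by rw [hv]; simp [opNorm]
  have hμ0 : ∀ i, 0 ≤ μ i := fun i => hρ.eigenvalues_nonneg i
  have hsum : ∑ i, μ i = 1 := by
    have h2 : ρ.trace = ∑ i, (μ i : ℂ) := by
      conv_lhs => rw [hspec]
      rw [Matrix.trace_mul_cycle]
      have hUU : star U * U = 1 := by
        simpa [hU] using (Matrix.UnitaryGroup.star_mul_self hherm.eigenvectorUnitary)
      rw [hUU, one_mul, Matrix.trace_diagonal]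
      simp
    rw [h1] at h2
    have h3 : ((∑ i, μ i : ℝ) : ℂ) = ((1:ℝ):ℂ) := by push_cast; simpa using h2.symm
    exact_mod_cast h3
  rw [key]
  calc ‖∑ i, (μ i : ℂ) * ((star U * (A * U)) i i)‖
      ≤ ∑ i, ‖(μ i : ℂ) * ((star U * (A * U)) i i)‖ :=
        norm_sum_le _ _
    _ ≤ ∑ i, μ i * opNorm A := by
        apply Finset.sum_le_sum
        intro i _
        rw [norm_mul, Complex.norm_of_nonneg (hμ0 i)]
        exact mul_le_mul_of_nonneg_left (hdiag i) (hμ0 i)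
    _ = opNorm A := by rw [← Finset.sum_mul, hsum, one_mul]

lemma fac_ge_24 (k : ℕ) : 24 * 5 ^ k ≤ Nat.factorial (k + 4) := by
  induction k with
  | zero => simp [Nat.factorial]
  | succ k ih =>
    have h5 : (5 : ℕ) ≤ k + 5 := by omega
    calc 24 * 5 ^ (k + 1) = 5 * (24 * 5 ^ k) := by ring
      _ ≤ 5 * Nat.factorial (k + 4) := by exact Nat.mul_le_mul_left 5 ih
      _ ≤ (k + 5) * Nat.factorial (k + 4) := Nat.mul_le_mul_right _ h5
      _ = Nat.factorial (k + 5) := rfl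

section
variable {n : ℕ}
noncomputable def traceReCLM (Hm : Matrix (Fin n) (Fin n) ℂ) :
    Matrix (Fin n) (Fin n) ℂ →L[ℝ] ℝ :=
  haveI : FiniteDimensional ℝ (Matrix (Fin n) (Fin n) ℂ) := Module.Finite.trans ℂ _
  LinearMap.toContinuousLinearMap <|
    Complex.reLm.comp <|
      ((Matrix.traceLinearMap (Fin n) ℂ ℂ).restrictScalars ℝ).comp
        ((LinearMap.mulLeft ℂ Hm).restrictScalars ℝ)

@[simp] lemma traceReCLM_apply (Hm X : Matrix (Fin n) (Fin n) ℂ) :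
    traceReCLM Hm X = ((Hm * X).trace).re := rfl

lemma pow_smul_apply (L : Matrix (Fin n) (Fin n) ℂ →L[ℂ] Matrix (Fin n) (Fin n) ℂ)
    (s : ℂ) (k : ℕ) : ∀ ρ : Matrix (Fin n) (Fin n) ℂ,
    ((s • L) ^ k) ρ = s ^ k • ((L ^ k) ρ) := by
  induction k with
  | zero => intro ρ; simp
  | succ k ih =>
    intro ρ
    rw [pow_succ, ContinuousLinearMap.mul_apply, ContinuousLinearMap.smul_apply,
      (((s • L) ^ k)).map_smul, ih (L ρ), smul_smul, ← pow_succ']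
    congr 1

lemma exp_term_eq (L : Matrix (Fin n) (Fin n) ℂ →L[ℂ] Matrix (Fin n) (Fin n) ℂ)
    (ρ : Matrix (Fin n) (Fin n) ℂ) (s : ℝ) (k : ℕ) :
    (((Nat.factorial k : ℂ))⁻¹ • ((s : ℂ) • L) ^ k) ρ
      = (s ^ k / (Nat.factorial k) : ℝ) • ((L ^ k) ρ) := by
  rw [ContinuousLinearMap.smul_apply, pow_smul_apply, smul_smul]
  ext i j
  simp only [Matrix.smul_apply, smul_eq_mul, Complex.real_smul]
  push_cast
  ring

lemma exp_apply_eq_tsum (L : Matrix (Fin n) (Fin n) ℂ →L[ℂ] Matrix (Fin n) (Fin n) ℂ)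
    (ρ : Matrix (Fin n) (Fin n) ℂ) (s : ℝ) :
    (NormedSpace.exp ((s : ℂ) • L)) ρ
      = ∑' k : ℕ, (s ^ k / (Nat.factorial k) : ℝ) • ((L ^ k) ρ) := by
  have hs : Summable (fun k : ℕ => ((Nat.factorial k : ℂ))⁻¹ • ((s : ℂ) • L) ^ k) := by
    letI i1 : NormedRing (Matrix (Fin n) (Fin n) ℂ →L[ℂ] Matrix (Fin n) (Fin n) ℂ) :=
      ContinuousLinearMap.toNormedRing
    letI i2 : NormedAlgebra ℂ (Matrix (Fin n) (Fin n) ℂ →L[ℂ] Matrix (Fin n) (Fin n) ℂ) :=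
      ContinuousLinearMap.toNormedAlgebra
    haveI i3 : CompleteSpace (Matrix (Fin n) (Fin n) ℂ →L[ℂ] Matrix (Fin n) (Fin n) ℂ) :=
      FiniteDimensional.complete ℂ _
    exact @NormedSpace.expSeries_summable' ℂ _ _ _ _ i1 i2 i3 ((s : ℂ) • L)
  have h1 : (NormedSpace.exp ((s : ℂ) • L)) ρ
      = ∑' k : ℕ, (((Nat.factorial k : ℂ))⁻¹ • ((s : ℂ) • L) ^ k) ρ := by
    rw [NormedSpace.exp_eq_tsum ℂ]
    exact (ContinuousLinearMap.apply ℂ _ ρ).map_tsum hs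
  rw [h1]
  exact tsum_congr fun k => exp_term_eq L ρ s k

lemma summable_matrix_terms (L : Matrix (Fin n) (Fin n) ℂ →L[ℂ] Matrix (Fin n) (Fin n) ℂ)
    (ρ : Matrix (Fin n) (Fin n) ℂ) (s : ℝ) :
    Summable (fun k : ℕ => (s ^ k / (Nat.factorial k) : ℝ) • ((L ^ k) ρ)) := by
  have hs0 : Summable (fun k : ℕ => ((Nat.factorial k : ℂ))⁻¹ • ((s : ℂ) • L) ^ k) := by
    letI i1 : NormedRing (Matrix (Fin n) (Fin n) ℂ →L[ℂ] Matrix (Fin n) (Fin n) ℂ) :=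
      ContinuousLinearMap.toNormedRing
    letI i2 : NormedAlgebra ℂ (Matrix (Fin n) (Fin n) ℂ →L[ℂ] Matrix (Fin n) (Fin n) ℂ) :=
      ContinuousLinearMap.toNormedAlgebra
    haveI i3 : CompleteSpace (Matrix (Fin n) (Fin n) ℂ →L[ℂ] Matrix (Fin n) (Fin n) ℂ) :=
      FiniteDimensional.complete ℂ _
    exact @NormedSpace.expSeries_summable' ℂ _ _ _ _ i1 i2 i3 ((s : ℂ) • L)
  have h1 := hs0.map (ContinuousLinearMap.apply ℂ _ ρ) (ContinuousLinearMap.apply ℂ _ ρ).continuous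
  refine h1.congr fun k => ?_
  simp only [Function.comp, ContinuousLinearMap.apply_apply]
  exact exp_term_eq L ρ s k

lemma exp_trace_re (Hm ρ : Matrix (Fin n) (Fin n) ℂ)
    (L : Matrix (Fin n) (Fin n) ℂ →L[ℂ] Matrix (Fin n) (Fin n) ℂ) (s : ℝ) :
    (Hm * (NormedSpace.exp ((s : ℂ) • L)) ρ).trace.re
      = ∑' k : ℕ, (s ^ k / (Nat.factorial k) : ℝ) * ((Hm * ((L ^ k) ρ)).trace).re := by
  calc (Hm * (NormedSpace.exp ((s : ℂ) • L)) ρ).trace.re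
      = traceReCLM Hm (∑' k : ℕ, (s ^ k / (Nat.factorial k) : ℝ) • ((L ^ k) ρ)) := by
        rw [← traceReCLM_apply, exp_apply_eq_tsum]
    _ = ∑' k : ℕ, traceReCLM Hm ((s ^ k / (Nat.factorial k) : ℝ) • ((L ^ k) ρ)) :=
        (traceReCLM Hm).map_tsum (summable_matrix_terms L ρ s)
    _ = ∑' k : ℕ, (s ^ k / (Nat.factorial k) : ℝ) * ((Hm * ((L ^ k) ρ)).trace).re := by
        refine tsum_congr fun k => ?_
        rw [(traceReCLM Hm).map_smul]
        simp [smul_eq_mul]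

lemma exp_trace_summable (Hm ρ : Matrix (Fin n) (Fin n) ℂ)
    (L : Matrix (Fin n) (Fin n) ℂ →L[ℂ] Matrix (Fin n) (Fin n) ℂ) (s : ℝ) :
    Summable (fun k : ℕ => (s ^ k / (Nat.factorial k) : ℝ) * ((Hm * ((L ^ k) ρ)).trace).re) := by
  have h1 := (summable_matrix_terms L ρ s).map (traceReCLM Hm) (traceReCLM Hm).continuous
  refine h1.congr fun k => ?_
  simp only [Function.comp]
  rw [(traceReCLM Hm).map_smul]
  simp [smul_eq_mul]

end

/-- cooling by gradient descent decreases energy. If the approximate gradient `g`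
along direction `a*` satisfies `|g - Tr(H L[ρ])| < 0.01 ε̃` and `g < -0.99 ε̃`, and the Heisenberg
adjoint `L†` satisfies `‖L†‖_{∞→∞} ≤ 3B'` and `‖L†(H)‖_∞ ≤ 3B` with `B' ≤ B`, `‖H‖_∞ ≤ B`,
`B ≥ 1`, then the step `s = |g|/(9B²)` decreases the energy:
`Tr(H exp(sL)(ρ)) < Tr(Hρ) - ε̃²/(20B²)`. -/
theorem cooling_by_gradient_descent {n : ℕ} (B B' εt : ℝ)
    (hB : 1 ≤ B) (hB' : B' ≤ B) (hε1 : 0 < εt) (hε2 : εt < 1 / 2)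
    (H ρ : Matrix (Fin n) (Fin n) ℂ) (hH : H.IsHermitian) (hHB : opNorm H ≤ B)
    (hρ : ρ.PosSemidef) (hρ1 : ρ.trace = 1)
    (L Ld : Matrix (Fin n) (Fin n) ℂ →L[ℂ] Matrix (Fin n) (Fin n) ℂ)
    (hdual : ∀ X Y, ((Ld X) * Y).trace = (X * L Y).trace)
    (htp : ∀ X, (L X).trace = 0)
    (hLd : ∀ X, opNorm (Ld X) ≤ 3 * B' * opNorm X)
    (hLdH : opNorm (Ld H) ≤ 3 * B)
    (g : ℝ) (hg1 : |g - (H * L ρ).trace.re| < 0.01 * εt) (hg2 : g < -0.99 * εt) :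
    (H * (NormedSpace.exp (((|g| / (9 * B ^ 2) : ℝ) : ℂ) • L)) ρ).trace.re
      < (H * ρ).trace.re - εt ^ 2 / (20 * B ^ 2) := by
  have hB0 : (0:ℝ) < B := lt_of_lt_of_le one_pos hB
  set s : ℝ := |g| / (9 * B ^ 2) with hs
  set x : ℝ := |g| / (3 * B) with hxdef
  have hs0 : 0 ≤ s := div_nonneg (abs_nonneg g) (by positivity)
  have hx0 : 0 ≤ x := div_nonneg (abs_nonneg g) (by positivity)
  have hxs : x = 3 * B * s := by rw [hs, hxdef]; field_simp; ring
  clear_value s x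
  -- iterated Heisenberg picture
  have hiter : ∀ k : ℕ, ∃ M : Matrix (Fin n) (Fin n) ℂ,
      (∀ σ, (H * ((L ^ (k+1)) σ)).trace = (M * σ).trace) ∧ opNorm M ≤ (3*B)^(k+1) := by
    intro k
    induction k with
    | zero =>
      refine ⟨Ld H, fun σ => ?_, by simpa using hLdH⟩
      rw [pow_one]; exact (hdual H σ).symm
    | succ k ih =>
      obtain ⟨M, hM1, hM2⟩ := ih
      refine ⟨Ld M, fun σ => ?_, ?_⟩
      · have h1 : ((L ^ (k+1+1)) σ) = (L ^ (k+1)) (L σ) := by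
          rw [pow_succ, ContinuousLinearMap.mul_apply]
        rw [h1, hM1 (L σ), ← hdual]
      · calc opNorm (Ld M) ≤ 3 * B' * opNorm M := hLd M
          _ ≤ 3 * B * opNorm M := by
              have := norm_nonneg (Matrix.toEuclideanCLM (𝕜 := ℂ) M)
              have h3 : opNorm M = ‖Matrix.toEuclideanCLM (𝕜 := ℂ) M‖ := rfl
              nlinarith [this]
          _ ≤ 3 * B * (3*B)^(k+1) := by
              have h30 : (0:ℝ) ≤ 3 * B := by positivity
              exact mul_le_mul_of_nonneg_left hM2 h30
          _ = (3*B)^(k+1+1) := by ring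
  -- bound on the trace terms
  have hck : ∀ k : ℕ, |(H * ((L ^ (k+1)) ρ)).trace.re| ≤ (3*B)^(k+1) := by
    intro k
    obtain ⟨M, hM1, hM2⟩ := hiter k
    calc |(H * ((L ^ (k+1)) ρ)).trace.re| = |((M * ρ).trace).re| := by rw [hM1 ρ]
      _ ≤ ‖(M * ρ).trace‖ := Complex.abs_re_le_norm _
      _ ≤ opNorm M := abs_trace_mul_le M ρ hρ hρ1
      _ ≤ (3*B)^(k+1) := hM2
  -- series expansion of the energy
  set a : ℕ → ℝ := fun k => s ^ k / (Nat.factorial k) * ((H * ((L ^ k) ρ)).trace).re with ha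
  have hE : (H * (NormedSpace.exp ((s : ℂ) • L)) ρ).trace.re = ∑' k, a k :=
    exp_trace_re H ρ L s
  have hsummable : Summable a := exp_trace_summable H ρ L s
  have hsummable1 : Summable (fun k => a (k+1)) := (summable_nat_add_iff 1).2 hsummable
  have hsummable2 : Summable (fun k => a (k+2)) := (summable_nat_add_iff 2).2 hsummable
  have hsplit : ∑' k, a k = a 0 + a 1 + ∑' k, a (k + 2) := by
    rw [← Summable.sum_add_tsum_nat_add 2 hsummable]
    simp [Finset.sum_range_succ]
  have ha0 : a 0 = (H * ρ).trace.re := by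
    simp [ha, Nat.factorial]
  have ha1 : a 1 = s * (H * L ρ).trace.re := by
    simp [ha, Nat.factorial]
  -- term bounds
  have hak : ∀ k : ℕ, |a (k+2)| ≤ x ^ (k+2) / (Nat.factorial (k+2) : ℝ) := by
    intro k
    have h1 : |a (k+2)| = s ^ (k+2) / (Nat.factorial (k+2) : ℝ) * |(H * ((L ^ (k+2)) ρ)).trace.re| := by
      rw [ha]
      rw [abs_mul, abs_of_nonneg (by positivity : (0:ℝ) ≤ s ^ (k+2) / (Nat.factorial (k+2) : ℝ))]
    rw [h1]
    have h2 : |(H * ((L ^ (k+2)) ρ)).trace.re| ≤ (3*B)^(k+2) := by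
      have := hck (k+1)
      convert this using 3 <;> omega
    calc s ^ (k+2) / (Nat.factorial (k+2) : ℝ) * |(H * ((L ^ (k+2)) ρ)).trace.re|
        ≤ s ^ (k+2) / (Nat.factorial (k+2) : ℝ) * (3*B)^(k+2) :=
          mul_le_mul_of_nonneg_left h2 (by positivity)
      _ = (3*B*s) ^ (k+2) / (Nat.factorial (k+2) : ℝ) := by
          rw [mul_pow]; ring
      _ = x ^ (k+2) / (Nat.factorial (k+2) : ℝ) := by rw [← hxs]
  have hsumf : Summable (fun k : ℕ => x ^ k / (Nat.factorial k : ℝ)) :=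
    Real.summable_pow_div_factorial x
  have hsumx2 : Summable (fun k : ℕ => x ^ (k+2) / (Nat.factorial (k+2) : ℝ)) :=
    (summable_nat_add_iff 2).2 hsumf
  have hsumx4 : Summable (fun k : ℕ => x ^ (k+4) / (Nat.factorial (k+4) : ℝ)) :=
    (summable_nat_add_iff 4).2 hsumf
  have habs : Summable (fun k => |a (k+2)|) :=
    Summable.of_nonneg_of_le (fun k => abs_nonneg _) hak hsumx2
  -- x is bounded
  have hc1 : |(H * L ρ).trace.re| ≤ 3*B := by
    have := hck 0
    simpa using this
  have hgle : |g| ≤ 3*B + 0.01*εt := by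
    calc |g| = |(g - (H * L ρ).trace.re) + (H * L ρ).trace.re| := by ring_nf
      _ ≤ |g - (H * L ρ).trace.re| + |(H * L ρ).trace.re| := abs_add_le _ _
      _ ≤ 3*B + 0.01*εt := by linarith [hg1.le, hc1]
  have hx3B : x * (3*B) = |g| := by
    rw [hxdef]; field_simp
  have hxle : x ≤ 601/600 := by nlinarith [hx3B, hgle, hB0, hε2, hε1, hB]
  -- geometric tail bound
  have hgeo_term : ∀ k : ℕ, x ^ (k+4) / (Nat.factorial (k+4) : ℝ) ≤ x^4/24 * (x/5)^k := by
    intro k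
    have hfac : (24 * 5 ^ k : ℝ) ≤ (Nat.factorial (k+4) : ℝ) := by
      exact_mod_cast fac_ge_24 k
    have h24 : (0:ℝ) < 24 * 5 ^ k := by positivity
    calc x ^ (k+4) / (Nat.factorial (k+4) : ℝ) ≤ x ^ (k+4) / (24 * 5 ^ k) := by
          apply div_le_div_of_nonneg_left (by positivity) h24 hfac
      _ = x^4/24 * (x/5)^k := by
          rw [pow_add, div_pow]; ring
  have hgeo_sum : Summable (fun k : ℕ => x^4/24 * (x/5)^k) := by
    apply Summable.mul_left
    apply summable_geometric_of_lt_one (by positivity)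
    nlinarith
  have htail4 : ∑' k : ℕ, x ^ (k+4) / (Nat.factorial (k+4) : ℝ) ≤ 0.0522 * x^4 := by
    have h1 : ∑' k : ℕ, x ^ (k+4) / (Nat.factorial (k+4) : ℝ) ≤ ∑' k : ℕ, x^4/24 * (x/5)^k :=
      Summable.tsum_le_tsum hgeo_term hsumx4 hgeo_sum
    have hx5 : x/5 < 1 := by nlinarith
    have h2 : ∑' k : ℕ, x^4/24 * (x/5)^k = x^4/24 * (1 - x/5)⁻¹ := by
      rw [tsum_mul_left, tsum_geometric_of_lt_one (by positivity) hx5]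
    have h3 : (1 - x/5)⁻¹ ≤ 3000/2399 := by
      have hp1 : (0:ℝ) < (2399:ℝ)/3000 := by norm_num
      have hp2 : (2399:ℝ)/3000 ≤ 1 - x/5 := by nlinarith
      calc (1 - x/5)⁻¹ ≤ ((2399:ℝ)/3000)⁻¹ := by
            apply inv_anti₀ hp1 hp2
        _ = 3000/2399 := by norm_num
    have h4 : x^4/24 * (1 - x/5)⁻¹ ≤ 0.0522 * x^4 := by
      have hx4 : (0:ℝ) ≤ x^4 := by positivity
      nlinarith [mul_le_mul_of_nonneg_left h3 (by positivity : (0:ℝ) ≤ x^4/24)]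
    linarith
  -- tail split
  have htail2 : ∑' k : ℕ, x ^ (k+2) / (Nat.factorial (k+2) : ℝ)
      ≤ x^2/2 + x^3/6 + 0.0522 * x^4 := by
    have hA2 := Summable.sum_add_tsum_nat_add 2 hsumf
    have hA4 := Summable.sum_add_tsum_nat_add 4 hsumf
    have hr2 : ∑ i ∈ Finset.range 2, x ^ i / (Nat.factorial i : ℝ) = 1 + x := by
      simp [Finset.sum_range_succ, Nat.factorial]
    have hr4 : ∑ i ∈ Finset.range 4, x ^ i / (Nat.factorial i : ℝ)
        = 1 + x + x^2/2 + x^3/6 := by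
      norm_num [Finset.sum_range_succ, Nat.factorial]
      try ring_nf
    have heq : ∑' k : ℕ, x ^ (k+2) / (Nat.factorial (k+2) : ℝ)
        = x^2/2 + x^3/6 + ∑' k : ℕ, x ^ (k+4) / (Nat.factorial (k+4) : ℝ) := by
      linarith [hA2, hA4, hr2, hr4]
    linarith [htail4, heq]
  -- bound the remainder
  have hR : |∑' k : ℕ, a (k+2)| ≤ x^2/2 + x^3/6 + 0.0522 * x^4 := by
    calc |∑' k : ℕ, a (k+2)| ≤ ∑' k : ℕ, |a (k+2)| := by
          simpa [Real.norm_eq_abs] using norm_tsum_le_tsum_norm (f := fun k => a (k+2))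
            (by simpa [Real.norm_eq_abs] using habs)
      _ ≤ ∑' k : ℕ, x ^ (k+2) / (Nat.factorial (k+2) : ℝ) := Summable.tsum_le_tsum hak habs hsumx2
      _ ≤ x^2/2 + x^3/6 + 0.0522 * x^4 := htail2
  -- gradient step analysis
  have hgneg : g < 0 := by nlinarith
  have hgabs : |g| = -g := abs_of_neg hgneg
  have hgpos : 0.99 * εt < |g| := by rw [hgabs]; linarith
  have hspos : 0 < s := by
    rw [hs]; apply div_pos; · rw [hgabs]; linarith
    · positivity
  have hsg : s * |g| = x^2 := by
    rw [hs, hxdef]; field_simp; ring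
  have hc1le : (H * L ρ).trace.re ≤ g + 0.01*εt := by
    have := abs_lt.1 hg1
    linarith [this.1]
  have ha1le : a 1 < -(98/99) * x^2 := by
    rw [ha1]
    have h1 : s * (H * L ρ).trace.re ≤ s * (g + 0.01*εt) :=
      mul_le_mul_of_nonneg_left hc1le hs0
    have h2 : s * (g + 0.01*εt) < -(98/99) * x^2 := by
      have h3 : s * g = -(s * |g|) := by rw [hgabs]; ring
      have h4 : 0.01 * εt * s < (1/99) * |g| * s :=
        mul_lt_mul_of_pos_right (by linarith) hspos
      nlinarith [hsg, h3, h4]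
    linarith
  -- final numeric inequality
  have hfinal : εt^2/(20*B^2) ≤ (98/99) * x^2 - (x^2/2 + x^3/6 + 0.0522 * x^4) := by
    have h20 : (0:ℝ) < 20*B^2 := by positivity
    rw [div_le_iff₀ h20]
    rcases le_or_gt x 0.17 with hcase | hcase
    · have hq : (0.99*εt) * (0.99*εt) ≤ (3*B*x) * (3*B*x) := by
        have h1 : 0.99*εt ≤ 3*B*x := by nlinarith [hx3B, hgpos]
        have h2 : (0:ℝ) ≤ 0.99*εt := by positivity
        nlinarith
      nlinarith [hq, pow_nonneg hx0 3, pow_nonneg hx0 4, sq_nonneg x, hB0,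
        mul_nonneg (mul_nonneg hx0 hx0) (sub_nonneg.2 hcase), sq_nonneg B, hB]
    · have hε4 : εt^2 ≤ 1/4 := by nlinarith
      have hB2 : (1:ℝ) ≤ B^2 := by nlinarith
      have hP : (1:ℝ)/80 ≤ (98/99) * x^2 - (x^2/2 + x^3/6 + 0.0522 * x^4) := by
        nlinarith [sq_nonneg (x - 0.17), sq_nonneg x, hxle, hcase.le,
          mul_nonneg (mul_nonneg hx0 hx0) hx0,
          mul_nonneg (sub_nonneg.2 hcase.le) (sub_nonneg.2 hxle),
          mul_nonneg (mul_nonneg (sub_nonneg.2 hcase.le) (sub_nonneg.2 hxle)) hx0,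
          mul_nonneg (mul_nonneg (mul_nonneg (sub_nonneg.2 hcase.le) (sub_nonneg.2 hxle)) hx0) hx0]
      nlinarith [hP, hε4, hB2]
  -- assemble
  rw [hE, hsplit, ha0]
  have hRle : ∑' k : ℕ, a (k+2) ≤ x^2/2 + x^3/6 + 0.0522 * x^4 := (abs_le.1 hR).2
  linarith [ha1le, hRle, hfinal]
end
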